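/- arXiv:2310.15283 — 2 statements merged into one kernel-verified Lean document; each statement's English description precedes it below -/
import Mathlib

section
/- Let E be a finite-dimensional real inner product space, c₀, C₀ > 0, and f : E → ℝ convex with c₀‖y‖ ≤ f(y) ≤ C₀(1 + ‖y‖) for all y. For λ > 0 let f_λ be the Moreau–Yosida approximation of f. Then: (i) for every λ > 0 and y ∈ E, f_λ(y) ≥ c₀‖y‖ − (C₀²/2)λ; and (ii) there exist C > 0 and q₁ > 1 such that for all q ∈ (1, q₁] and all y ∈ E, (1/C) ‖y‖^q − C ≤ ( f_{q−1}(y) )^q ≤ C (1 + ‖y‖^q). -/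
/-- The Moreau–Yosida approximation `f_λ(y) = inf_{y'} ( f y' + ‖y - y'‖² / (2λ) )`. -/
noncomputable def moreauYosida {E : Type*} [NormedAddCommGroup E] [InnerProductSpace ℝ E]
    (f : E → ℝ) (lam : ℝ) (y : E) : ℝ :=
  ⨅ y' : E, (f y' + ‖y - y'‖ ^ 2 / (2 * lam))

/-- Growth bounds for the Moreau–Yosida regularizations (proof of Lemma 8.2(a),
equation "bound g"): (i) `f_λ(y) ≥ c₀‖y‖ - (C₀²/2)λ`; (ii) there are `C > 0` and
`q₁ > 1` so that for `q ∈ (1, q₁]`, `(1/C)‖y‖^q - C ≤ (f_{q-1}(y))^q ≤ C(1 + ‖y‖^q)`. -/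
theorem moreauYosida_growth_bounds
    {E : Type*} [NormedAddCommGroup E] [InnerProductSpace ℝ E] [FiniteDimensional ℝ E]
    (c₀ C₀ : ℝ) (hc₀ : 0 < c₀) (hC₀ : 0 < C₀) (f : E → ℝ)
    (hconv : ConvexOn ℝ Set.univ f)
    (hlow : ∀ y, c₀ * ‖y‖ ≤ f y)
    (hup : ∀ y, f y ≤ C₀ * (1 + ‖y‖)) :
    (∀ lam : ℝ, 0 < lam → ∀ y : E,
      c₀ * ‖y‖ - C₀ ^ 2 / 2 * lam ≤ moreauYosida f lam y) ∧
    (∃ C : ℝ, 0 < C ∧ ∃ q₁ : ℝ, 1 < q₁ ∧ ∀ q : ℝ, 1 < q → q ≤ q₁ → ∀ y : E,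
      (1 / C) * ‖y‖ ^ q - C ≤ (moreauYosida f (q - 1) y) ^ q ∧
      (moreauYosida f (q - 1) y) ^ q ≤ C * (1 + ‖y‖ ^ q)) := by
  have hf0 : ∀ y' : E, 0 ≤ f y' := fun y' =>
    le_trans (by positivity) (hlow y')
  -- either c₀ ≤ C₀ or the space is trivial
  have hcC : c₀ ≤ C₀ ∨ ∀ y : E, ‖y‖ = 0 := by
    rcases subsingleton_or_nontrivial E with hE | hE
    · exact Or.inr fun y => by rw [Subsingleton.elim y 0, norm_zero]
    · left
      obtain ⟨v, hv⟩ := exists_ne (0 : E)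
      have hvn : (0:ℝ) < ‖v‖ := norm_pos_iff.mpr hv
      by_contra h
      push_neg at h
      set t : ℝ := (C₀ + 1) / (c₀ - C₀) with ht_def
      have ht : 0 < t := by apply div_pos <;> linarith
      set y : E := (t / ‖v‖) • v with hy_def
      have hy : ‖y‖ = t := by
        rw [hy_def, norm_smul, Real.norm_eq_abs, abs_of_pos (by positivity)]
        field_simp
      have h1 := hlow y
      have h2 := hup y
      rw [hy] at h1 h2
      have h3 : t * (c₀ - C₀) = C₀ + 1 :=
        div_mul_cancel₀ _ (ne_of_gt (by linarith))
      nlinarith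
  -- part (i)
  have part1 : ∀ lam : ℝ, 0 < lam → ∀ y : E,
      c₀ * ‖y‖ - C₀ ^ 2 / 2 * lam ≤ moreauYosida f lam y := by
    intro lam hlam y
    apply le_ciInf
    intro y'
    have h1 : c₀ * ‖y'‖ ≤ f y' := hlow y'
    have h2 : ‖y‖ - ‖y - y'‖ ≤ ‖y'‖ := by
      have := norm_sub_norm_le y y'
      linarith
    have ht : (0:ℝ) ≤ ‖y - y'‖ := norm_nonneg _
    have h3 : ‖y - y'‖ ^ 2 / (2 * lam) * (2 * lam) = ‖y - y'‖ ^ 2 :=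
      div_mul_cancel₀ _ (by positivity)
    rcases hcC with hc | hz
    · have h4 : c₀ * (‖y‖ - ‖y - y'‖) ≤ c₀ * ‖y'‖ :=
        mul_le_mul_of_nonneg_left h2 hc₀.le
      nlinarith [sq_nonneg (‖y - y'‖ - c₀ * lam),
        mul_nonneg (mul_nonneg (sub_nonneg.2 hc) (by linarith : (0:ℝ) ≤ C₀ + c₀)) (sq_nonneg lam),
        mul_pos hlam hlam]
    · have hy0 : ‖y‖ = 0 := hz y
      have hq : 0 ≤ ‖y - y'‖ ^ 2 / (2 * lam) := by positivity
      nlinarith [hf0 y', sq_nonneg C₀, mul_nonneg (sq_nonneg C₀) hlam.le]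
  refine ⟨part1, ?_⟩
  -- constants
  set m : ℝ := min 1 ((c₀ / 2) ^ 2) with hm_def
  have hm : 0 < m := lt_min one_pos (by positivity)
  set R : ℝ := C₀ ^ 2 / c₀ with hR_def
  have hR : 0 ≤ R := by positivity
  set M : ℝ := max 1 C₀ with hM_def
  have hM : (1:ℝ) ≤ M := le_max_left _ _
  set C : ℝ := max (max ((2 * M) ^ 2) (1 / m)) (max 1 R) with hC_def
  have hC1 : (2 * M) ^ 2 ≤ C := le_trans (le_max_left _ _) (le_max_left _ _)
  have hCm : 1 / m ≤ C := le_trans (le_max_right _ _) (le_max_left _ _)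
  have hCR : max 1 R ≤ C := le_max_right _ _
  have hC : 0 < C := lt_of_lt_of_le (by nlinarith) hC1
  refine ⟨C, hC, 2, one_lt_two, ?_⟩
  intro q hq1 hq2 y
  have hlam : (0:ℝ) < q - 1 := by linarith
  have hqpos : (0:ℝ) < q := by linarith
  set g : ℝ := moreauYosida f (q - 1) y with hg_def
  have hbdd : BddBelow (Set.range fun y' : E => f y' + ‖y - y'‖ ^ 2 / (2 * (q - 1))) := by
    refine ⟨0, ?_⟩
    rintro x ⟨y', rfl⟩
    have : 0 ≤ ‖y - y'‖ ^ 2 / (2 * (q - 1)) := by positivity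
    exact add_nonneg (hf0 y') this
  have hg0 : 0 ≤ g := by
    apply le_ciInf
    intro y'
    have : 0 ≤ ‖y - y'‖ ^ 2 / (2 * (q - 1)) := by positivity
    exact add_nonneg (hf0 y') this
  have hgup : g ≤ C₀ * (1 + ‖y‖) := by
    have hle : g ≤ f y + ‖y - y‖ ^ 2 / (2 * (q - 1)) := ciInf_le hbdd y
    simp only [sub_self, norm_zero] at hle
    have : (0:ℝ) ^ 2 / (2 * (q - 1)) = 0 := by norm_num
    rw [this, add_zero] at hle
    exact le_trans hle (hup y)
  have hglo : c₀ * ‖y‖ - C₀ ^ 2 / 2 * (q - 1) ≤ g := part1 (q - 1) hlam y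
  constructor
  · -- lower bound on g ^ q
    rcases le_total ‖y‖ R with hy | hy
    · -- small ‖y‖ : LHS ≤ 0 ≤ g^q
      have hgq : 0 ≤ g ^ q := Real.rpow_nonneg hg0 q
      have h1 : ‖y‖ ^ q ≤ (max 1 R) ^ q :=
        Real.rpow_le_rpow (norm_nonneg y) (le_trans hy (le_max_right _ _)) hqpos.le
      have h2 : (max 1 R) ^ q ≤ (max 1 R) ^ (2:ℝ) :=
        Real.rpow_le_rpow_of_exponent_le (le_max_left _ _) hq2
      have h3 : (max 1 R) ^ (2:ℝ) = (max 1 R) ^ 2 := Real.rpow_two _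
      have h4 : (max 1 R) ^ 2 ≤ C * C := by
        have h0 : (0:ℝ) ≤ max 1 R := le_trans zero_le_one (le_max_left _ _)
        nlinarith
      have h5 : ‖y‖ ^ q ≤ C * C := by rw [h3] at h2; linarith
      have h6 : (1 / C) * ‖y‖ ^ q ≤ C := by
        rw [div_mul_eq_mul_div, one_mul, div_le_iff₀ hC]
        exact h5
      linarith
    · -- large ‖y‖ : g ≥ c₀‖y‖/2
      have hcR : c₀ * R = C₀ ^ 2 := by rw [hR_def]; field_simp
      have h7 : C₀ ^ 2 ≤ c₀ * ‖y‖ := by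
        rw [← hcR]; exact mul_le_mul_of_nonneg_left hy hc₀.le
      have h6 : C₀ ^ 2 / 2 * (q - 1) ≤ C₀ ^ 2 / 2 := by nlinarith [sq_nonneg C₀]
      have hgl : c₀ / 2 * ‖y‖ ≤ g := by nlinarith
      have hgl0 : (0:ℝ) ≤ c₀ / 2 * ‖y‖ := by positivity
      have h8 : (c₀ / 2 * ‖y‖) ^ q ≤ g ^ q := Real.rpow_le_rpow hgl0 hgl hqpos.le
      have h9 : (c₀ / 2 * ‖y‖) ^ q = (c₀ / 2) ^ q * ‖y‖ ^ q :=
        Real.mul_rpow (by positivity) (norm_nonneg y)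
      have h10 : m ≤ (c₀ / 2) ^ q := by
        rcases le_total 1 (c₀ / 2) with h | h
        · have : (c₀ / 2) ^ (0:ℝ) ≤ (c₀ / 2) ^ q :=
            Real.rpow_le_rpow_of_exponent_le h hqpos.le
          rw [Real.rpow_zero] at this
          exact le_trans (min_le_left _ _) this
        · have h11 : (c₀ / 2) ^ (2:ℝ) ≤ (c₀ / 2) ^ q :=
            Real.rpow_le_rpow_of_exponent_ge (by positivity) h hq2
          rw [Real.rpow_two] at h11
          exact le_trans (min_le_right _ _) h11
      have h12 : m * ‖y‖ ^ q ≤ (c₀ / 2) ^ q * ‖y‖ ^ q :=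
        mul_le_mul_of_nonneg_right h10 (Real.rpow_nonneg (norm_nonneg y) q)
      have h13 : 1 / C ≤ m := by
        rw [div_le_iff₀ hC]
        have := mul_le_mul_of_nonneg_left hCm hm.le
        rwa [mul_one_div_cancel hm.ne'] at this
      have h14 : (1 / C) * ‖y‖ ^ q ≤ m * ‖y‖ ^ q :=
        mul_le_mul_of_nonneg_right h13 (Real.rpow_nonneg (norm_nonneg y) q)
      rw [h9] at h8
      linarith
  · -- upper bound on g ^ q
    set N : ℝ := max 1 ‖y‖ with hN_def
    have hN : (1:ℝ) ≤ N := le_max_left _ _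
    have hNy : ‖y‖ ≤ N := le_max_right _ _
    have hgMN : g ≤ 2 * M * N := by
      have hCM : C₀ ≤ M := le_max_right _ _
      have h2N : 1 + ‖y‖ ≤ 2 * N := by linarith
      calc g ≤ C₀ * (1 + ‖y‖) := hgup
        _ ≤ M * (2 * N) :=
            mul_le_mul hCM h2N (by linarith [norm_nonneg y]) (by linarith)
        _ = 2 * M * N := by ring
    have h1 : g ^ q ≤ (2 * M * N) ^ q := Real.rpow_le_rpow hg0 hgMN hqpos.le
    have h2 : (2 * M * N) ^ q = (2 * M) ^ q * N ^ q :=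
      Real.mul_rpow (by positivity) (by linarith)
    have h3 : (2 * M) ^ q ≤ (2 * M) ^ (2:ℝ) :=
      Real.rpow_le_rpow_of_exponent_le (by linarith) hq2
    have h3' : (2 * M) ^ (2:ℝ) = (2 * M) ^ 2 := Real.rpow_two _
    have h5 : N ^ q ≤ 1 + ‖y‖ ^ q := by
      rcases le_total ‖y‖ 1 with h | h
      · rw [hN_def, max_eq_left h, Real.one_rpow]
        have := Real.rpow_nonneg (norm_nonneg y) q
        linarith
      · rw [hN_def, max_eq_right h]
        linarith
    have h6 : (2 * M) ^ q * N ^ q ≤ (2 * M) ^ 2 * (1 + ‖y‖ ^ q) := by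
      apply mul_le_mul (by rw [← h3']; exact h3) h5
        (Real.rpow_nonneg (by linarith) q) (by positivity)
    have h7 : (2 * M) ^ 2 * (1 + ‖y‖ ^ q) ≤ C * (1 + ‖y‖ ^ q) := by
      apply mul_le_mul_of_nonneg_right hC1
      have := Real.rpow_nonneg (norm_nonneg y) q
      linarith
    calc g ^ q ≤ (2 * M * N) ^ q := h1
      _ = (2 * M) ^ q * N ^ q := h2
      _ ≤ (2 * M) ^ 2 * (1 + ‖y‖ ^ q) := h6
      _ ≤ C * (1 + ‖y‖ ^ q) := h7
end

section
/- Let E be a finite-dimensional real inner product space, c₀, C₀ > 0, and f : E → ℝ convex with c₀‖y‖ ≤ f(y) ≤ C₀(1 + ‖y‖) for all y. Then there is a constant C > 0 such that for all q ∈ (1, 2] and all y ∈ E, ( f_{q−1}(y) )^q ≥ f(y) − C q (q − 1), where f_{q−1} denotes the Moreau–Yosida approximation of f with parameter λ = q − 1. -/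
/-- Inequality (ineq f) in Section 8: there is `C > 0` such that for all `q ∈ (1,2]`
and all `y`, `(f_{q-1}(y))^q ≥ f(y) - C q (q-1)`. -/
theorem moreauYosida_pow_ge
    {E : Type*} [NormedAddCommGroup E] [InnerProductSpace ℝ E] [FiniteDimensional ℝ E]
    (c₀ C₀ : ℝ) (hc₀ : 0 < c₀) (hC₀ : 0 < C₀) (f : E → ℝ)
    (hconv : ConvexOn ℝ Set.univ f)
    (hlow : ∀ y, c₀ * ‖y‖ ≤ f y)
    (hup : ∀ y, f y ≤ C₀ * (1 + ‖y‖)) :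
    ∃ C : ℝ, 0 < C ∧ ∀ q : ℝ, 1 < q → q ≤ 2 → ∀ y : E,
      f y - C * q * (q - 1) ≤ (moreauYosida f (q - 1) y) ^ q := by
  have hf0 : ∀ y, 0 ≤ f y := fun y =>
    le_trans (by positivity) (hlow y)
  -- Lipschitz-type bound from convexity and linear growth
  have hlip : ∀ x z : E, f z ≤ f x + C₀ * ‖z - x‖ := by
    intro x z
    have key : ∀ ε > (0:ℝ), f z ≤ f x + C₀ * ‖z - x‖ + ε := by
      intro ε hε
      obtain ⟨t, ht1, ht2⟩ : ∃ t : ℝ, 1 ≤ t ∧ C₀ * (1 + ‖x‖) / t ≤ ε := by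
        refine ⟨max 1 (C₀ * (1 + ‖x‖) / ε), le_max_left _ _, ?_⟩
        rw [div_le_iff₀ (lt_of_lt_of_le one_pos (le_max_left _ _))]
        calc C₀ * (1 + ‖x‖) = ε * (C₀ * (1 + ‖x‖) / ε) := by field_simp
        _ ≤ ε * max 1 (C₀ * (1 + ‖x‖) / ε) := by
            exact mul_le_mul_of_nonneg_left (le_max_right _ _) hε.le
      have ht0 : 0 < t := lt_of_lt_of_le one_pos ht1
      set w : E := x + t • (z - x) with hw
      have hcomb : (1 - 1/t) • x + (1/t) • w = z := by
        rw [hw, smul_add, smul_smul]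
        have : (1/t) * t = 1 := by field_simp
        rw [this, one_smul]
        module
      have hconvineq := hconv.2 (Set.mem_univ x) (Set.mem_univ w)
        (show (0:ℝ) ≤ 1 - 1/t by
          have : 1/t ≤ 1 := by rw [div_le_one ht0]; exact ht1
          linarith)
        (show (0:ℝ) ≤ 1/t by positivity) (by ring)
      rw [hcomb] at hconvineq
      simp only [smul_eq_mul] at hconvineq
      have hwnorm : ‖w‖ ≤ ‖x‖ + t * ‖z - x‖ := by
        calc ‖w‖ ≤ ‖x‖ + ‖t • (z - x)‖ := norm_add_le _ _
        _ = ‖x‖ + t * ‖z - x‖ := by rw [norm_smul, Real.norm_of_nonneg ht0.le]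
      have hfw : f w ≤ C₀ * (1 + ‖x‖ + t * ‖z - x‖) := by
        calc f w ≤ C₀ * (1 + ‖w‖) := hup w
        _ ≤ C₀ * (1 + ‖x‖ + t * ‖z - x‖) := by nlinarith
      have h1t : 0 < 1/t := by positivity
      have := hconvineq
      have hfx := hf0 x
      have : f z ≤ (1 - 1/t) * f x + (1/t) * (C₀ * (1 + ‖x‖ + t * ‖z - x‖)) := by
        refine le_trans hconvineq ?_
        have := mul_le_mul_of_nonneg_left hfw h1t.le
        linarith
      have hexp : (1/t) * (C₀ * (1 + ‖x‖ + t * ‖z - x‖))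
          = C₀ * (1 + ‖x‖) / t + C₀ * ‖z - x‖ := by field_simp
      rw [hexp] at this
      nlinarith [mul_le_mul_of_nonneg_left hfx h1t.le]
    linarith [le_of_forall_pos_le_add key]
  refine ⟨C₀^2/2 + 1, by positivity, fun q hq1 hq2 y => ?_⟩
  have hlam : (0:ℝ) < q - 1 := by linarith
  -- lower bounds on the Moreau–Yosida approximation
  have hMY0 : 0 ≤ moreauYosida f (q - 1) y := by
    refine le_ciInf fun y' => ?_
    have := hf0 y'
    positivity
  have hMYlow : f y - C₀^2/2 * (q-1) ≤ moreauYosida f (q - 1) y := by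
    refine le_ciInf fun y' => ?_
    have h1 : f y ≤ f y' + C₀ * ‖y - y'‖ := hlip y' y
    have h2 : 0 ≤ (‖y - y'‖ - C₀ * (q-1))^2 / (2*(q-1)) := by positivity
    have h3 : (‖y - y'‖ - C₀ * (q-1))^2 / (2*(q-1))
        = ‖y - y'‖^2 / (2*(q-1)) - C₀ * ‖y - y'‖ + C₀^2/2 * (q-1) := by
      field_simp; ring
    linarith [h3 ▸ h2]
  set a := moreauYosida f (q - 1) y with ha
  have hbern : 1 + q * (a - 1) ≤ a ^ q := by
    have := one_add_mul_self_le_rpow_one_add (s := a - 1) (by linarith) hq1.le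
    simpa using this
  have hfy := hf0 y
  nlinarith [mul_le_mul_of_nonneg_left hMYlow (by linarith : (0:ℝ) ≤ q),
    mul_le_mul_of_nonneg_left hfy hlam.le]
end
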